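/- Γ-termination theorem: let P be a Γ-extended program. If every infinite call sequence P = e₀ → e₁, G₁ → e₂, G₂ → … in the approximate extended semantics for P is such that the multipath G₁, G₂, … has a thread of infinite descent, then P is Γ-terminating, i.e., for all pure λ-expressions t₁,…,t_k with Aᵢ ⇒*_Γ tᵢ (where A₁,…,A_k are the nonterminal occurrences of P), the pure program P[t₁/A₁,…,t_k/A_k] terminates under call-by-value evaluation: P[t₁/A₁,…,t_k/A_k]:[] ⇓ v for some value v. -/

import Mathlib

/- Pure untyped λ-expressions. -/
inductive Exp : Type
  | var : String → Exp
  | app : Exp → Exp → Exp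
  | lam : String → Exp → Exp
deriving DecidableEq

namespace Exp
/-- Free variables of a pure λ-expression. -/
def fv : Exp → Finset String
  | var x => {x}
  | app e1 e2 => fv e1 ∪ fv e2
  | lam x e => fv e \ {x}
end Exp

/- Γ-extended λ-expressions: variables, nonterminals, applications and
abstractions. -/
inductive ExpE : Type
  | var : String → ExpE
  | app : ExpE → ExpE → ExpE
  | lam : String → ExpE → ExpE
  | nt : String → ExpE
deriving DecidableEq

/-- A λ-regular grammar `Γ = (N, Π)`: a finite set of nonterminals and a
finite set of productions `A ::= e`; we assume (as in the paper) that no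
production has the form `A ::= A'` with `A'` a nonterminal. -/
structure Grammar where
  N : Set String
  prods : Set (String × ExpE)
  finN : N.Finite
  finProds : prods.Finite
  prods_mem : ∀ p ∈ prods, p.1 ∈ N
  no_nt_prod : ∀ p ∈ prods, ∀ A : String, p.2 ≠ ExpE.nt A

/-- The derivation relation `e ⇒*_Γ t`, relating Γ-extended expressions to the
pure λ-expressions obtained by replacing every nonterminal occurrence
(independently) by a λ-expression it derives via the productions. -/
inductive Deriv (Γ : Grammar) : ExpE → Exp → Prop
  | var (x : String) : Deriv Γ (ExpE.var x) (Exp.var x)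
  | app {a1 a2 : ExpE} {t1 t2 : Exp} :
      Deriv Γ a1 t1 → Deriv Γ a2 t2 → Deriv Γ (ExpE.app a1 a2) (Exp.app t1 t2)
  | lam {x : String} {a : ExpE} {t : Exp} :
      Deriv Γ a t → Deriv Γ (ExpE.lam x a) (Exp.lam x t)
  | nt {A : String} {e : ExpE} {t : Exp} :
      (A, e) ∈ Γ.prods → Deriv Γ e t → Deriv Γ (ExpE.nt A) t

/-- Free variables of a Γ-extended expression:
`fv(e) = { x | ∃t, e ⇒*_Γ t and x ∈ fv(t) }`. -/
def fvE (Γ : Grammar) (e : ExpE) : Set String :=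
  {x | ∃ t, Deriv Γ e t ∧ x ∈ Exp.fv t}
/- Values (closures), environments and states of the (pure)
environment-based semantics. -/
inductive Val : Type
  | clos : String → Exp → (String → Option Val) → Val

abbrev Env := String → Option Val
abbrev State := Exp × Env

/-- A value `λx.e:ρ` viewed as a state. -/
def Val.toState : Val → State
  | .clos x e ρ => (Exp.lam x e, ρ)

/-- The λ-expression component of a value. -/
def Val.toExp : Val → Exp
  | .clos x e _ => Exp.lam x e

def Env.update (ρ : Env) (x : String) (v : Val) : Env :=
  fun y => if y = x then some v else ρ y

def Env.empty : Env := fun _ => none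
/-- Arc labels: `=` (eq) and `↓` (dec). -/
inductive Lab : Type
  | eq : Lab
  | dec : Lab
deriving DecidableEq

/-- Name paths; here the nodes of generated size-change graphs are `ε = []`
or single variables `[y]`. -/
abbrev NP := List String
abbrev Arc := NP × Lab × NP
abbrev ArcSet := Set Arc

/-- `id= = {ε =→ ε} ∪ {y =→ y | y ∈ s}`. -/
def idEqS (s : Set String) : ArcSet :=
  {a | a = ([], Lab.eq, []) ∨ ∃ y ∈ s, a = ([y], Lab.eq, [y])}

/-- `id↓ = {ε ↓→ ε} ∪ {y =→ y | y ∈ s}`. -/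
def idDecS (s : Set String) : ArcSet :=
  {a | a = ([], Lab.dec, []) ∨ ∃ y ∈ s, a = ([y], Lab.eq, [y])}

/-- The graph `{x =→ ε} ∪ {x ↓→ y | y ∈ s}` of the variable rule. -/
def varGraphS (x : String) (s : Set String) : ArcSet :=
  {a | a = ([x], Lab.eq, []) ∨ ∃ y ∈ s, a = ([x], Lab.dec, [y])}

/-- `G₁^{-ε/λx.e₀}`: keep arcs between variables, replace `ε r→ z` (`z` a
variable) by `ε ↓→ z`, and, when `x ∉ fv(e₀)`, additionally replace each
arc `p r→ ε` by `p ↓→ ε`.  (`fve0` is `fv(e₀)`.) -/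
def GminusS (x : String) (fve0 : Set String) (G1 : ArcSet) : ArcSet :=
  {a | (∃ (y : String) (r : Lab) (z : String), a = ([y], r, [z]) ∧ ([y], r, [z]) ∈ G1) ∨
       (∃ z : String, a = (([] : NP), Lab.dec, [z]) ∧ ∃ r, (([] : NP), r, [z]) ∈ G1) ∨
       (x ∉ fve0 ∧ ∃ p : NP, a = (p, Lab.dec, ([] : NP)) ∧ ∃ r, (p, r, ([] : NP)) ∈ G1)}

/-- `G₂^{ε↦x}`: `y r→ x` for each `y r→ ε ∈ G₂`, and `ε ↓→ x` for each
`ε r→ ε ∈ G₂`. -/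
def GepsS (x : String) (G2 : ArcSet) : ArcSet :=
  {a | (∃ (y : String) (r : Lab), a = ([y], r, [x]) ∧ ([y], r, ([] : NP)) ∈ G2) ∨
       (a = (([] : NP), Lab.dec, [x]) ∧ ∃ r, (([] : NP), r, ([] : NP)) ∈ G2)}

/-- `∪_{e₀}`: union restricted to arcs whose target is in `fv(e₀) ∪ {ε}`. -/
def unionRS (fve0 : Set String) (A B : ArcSet) : ArcSet :=
  {a | a ∈ A ∪ B ∧ (a.2.2 = ([] : NP) ∨ ∃ y ∈ fve0, a.2.2 = [y])}

/-- The label set `R(x,z)` used in graph composition. -/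
def labelsA (G1 G2 : ArcSet) (x z : NP) : Set Lab :=
  {r | ∃ y s, ((x, r, y) ∈ G1 ∧ (y, s, z) ∈ G2) ∨
              ((x, s, y) ∈ G1 ∧ (y, r, z) ∈ G2)}

/-- Composition `G₁;G₂` of size-change graphs (as arc sets): `x ↓→ z` whenever
`↓ ∈ R(x,z)`, and `x =→ z` whenever `R(x,z) = {=}`. -/
def compA (G1 G2 : ArcSet) : ArcSet :=
  {a | (∃ x z, a = (x, Lab.dec, z) ∧ Lab.dec ∈ labelsA G1 G2 x z) ∨
       (∃ x z, a = (x, Lab.eq, z) ∧ labelsA G1 G2 x z = {Lab.eq})}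
/-- `SubE Γ e t` means `t ∈ subexps(e)`: subexpressions of a Γ-extended
expression, looking through productions at nonterminals. -/
inductive SubE (Γ : Grammar) : ExpE → ExpE → Prop
  | refl (e : ExpE) : SubE Γ e e
  | lam {x : String} {e t : ExpE} : SubE Γ e t → SubE Γ (ExpE.lam x e) t
  | appL {e1 e2 t : ExpE} : SubE Γ e1 t → SubE Γ (ExpE.app e1 e2) t
  | appR {e1 e2 t : ExpE} : SubE Γ e2 t → SubE Γ (ExpE.app e1 e2) t
  | nt {A : String} {e t : ExpE} :
      (A, e) ∈ Γ.prods → SubE Γ e t → SubE Γ (ExpE.nt A) t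
/- The approximate extended semantics with size-change graphs (environments
removed), for a fixed Γ-extended program `P`. -/
inductive CallAXn (Γ : Grammar) : ExpE → ExpE → ArcSet → Prop
  | gram {A : String} {e : ExpE} :
      (A, e) ∈ Γ.prods → CallAXn Γ (ExpE.nt A) e (idEqS (fvE Γ e))

mutual
  inductive EvalAX (Γ : Grammar) (P : ExpE) : ExpE → ExpE → ArcSet → Prop
    | value (x : String) (e : ExpE) :
        EvalAX Γ P (ExpE.lam x e) (ExpE.lam x e) (idEqS (fvE Γ (ExpE.lam x e)))
    | var {e1 e2 : ExpE} {x : String} {e0 v2 : ExpE} {G1 G2 : ArcSet} :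
        SubE Γ P (ExpE.app e1 e2) →
        EvalAX Γ P e1 (ExpE.lam x e0) G1 → EvalAX Γ P e2 v2 G2 →
        EvalAX Γ P (ExpE.var x) v2 (varGraphS x (fvE Γ v2))
    | resultC {a e' v : ExpE} {G' G : ArcSet} :
        CallAXc Γ P a e' G' → EvalAX Γ P e' v G → EvalAX Γ P a v (compA G' G)
    | resultN {a e' v : ExpE} {G' G : ArcSet} :
        CallAXn Γ a e' G' → EvalAX Γ P e' v G → EvalAX Γ P a v (compA G' G)
  inductive CallAXc (Γ : Grammar) (P : ExpE) : ExpE → ExpE → ArcSet → Prop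
    | call {e1 e2 : ExpE} {x : String} {e0 v2 : ExpE} {G1 G2 : ArcSet} :
        EvalAX Γ P e1 (ExpE.lam x e0) G1 → EvalAX Γ P e2 v2 G2 →
        CallAXc Γ P (ExpE.app e1 e2) e0
          (unionRS (fvE Γ e0) (GminusS x (fvE Γ e0) G1) (GepsS x G2))
end

inductive CallAXr (Γ : Grammar) : ExpE → ExpE → ArcSet → Prop
  | oper (e1 e2 : ExpE) : CallAXr Γ (ExpE.app e1 e2) e1 (idDecS (fvE Γ e1))

inductive CallAXd (Γ : Grammar) : ExpE → ExpE → ArcSet → Prop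
  | opnd (e1 e2 : ExpE) : CallAXd Γ (ExpE.app e1 e2) e2 (idDecS (fvE Γ e2))

/-- The approximate extended call relation `→ = →r ∪ →d ∪ →c ∪ →n`. -/
def CallAXAny (Γ : Grammar) (P : ExpE) (e e' : ExpE) (G : ArcSet) : Prop :=
  CallAXr Γ e e' G ∨ CallAXd Γ e e' G ∨ CallAXc Γ P e e' G ∨ CallAXn Γ e e' G

/- Environment-based evaluation `s ⇓ v` of pure λ-expressions, with the
three-premise (Apply) rule. -/
inductive EvalE : State → Val → Prop
  | value (x : String) (e : Exp) (ρ : Env) :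
      EvalE (Exp.lam x e, ρ) (Val.clos x e ρ)
  | var {ρ : Env} {x : String} {v : Val} :
      ρ x = some v → EvalE (Exp.var x, ρ) v
  | apply {e1 e2 : Exp} {ρ ρ0 : Env} {x : String} {e0 : Exp} {v2 v : Val} :
      EvalE (e1, ρ) (Val.clos x e0 ρ0) → EvalE (e2, ρ) v2 →
      EvalE (e0, Env.update ρ0 x v2) v →
      EvalE (Exp.app e1 e2, ρ) v

namespace GT

abbrev T := Val ⊕ State

def envOf : Val → Env
  | .clos _ _ ρ => ρ

theorem toExp_clos (x t ρ) : (Val.clos x t ρ).toExp = Exp.lam x t := rfl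

/-- One-step "support" relation used to build the well-founded size measure. -/
def pre : T → T → Prop
  | Sum.inl w, Sum.inl (Val.clos x t ρ) => ∃ y ∈ Exp.fv (Exp.lam x t), ρ y = some w
  | Sum.inl w, Sum.inr s => ∃ y ∈ Exp.fv s.1, s.2 y = some w
  | Sum.inr _, _ => False

theorem accPreVal : ∀ v : Val, Acc pre (Sum.inl v) := fun v =>
  Val.rec (motive_1 := fun v => Acc pre (Sum.inl v))
    (motive_2 := fun o => ∀ w, o = some w → Acc pre (Sum.inl w))
    (fun x t ρ ih => Acc.intro _ (fun c hc => by
      cases c with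
      | inl w =>
        obtain ⟨y, _, hy⟩ := hc
        exact ih y w hy
      | inr s => exact hc.elim))
    (fun w hw => by cases hw)
    (fun v ihv w hw => by cases hw; exact ihv) v

theorem accPre : ∀ a : T, Acc pre a
  | Sum.inl v => accPreVal v
  | Sum.inr s => Acc.intro _ (fun c hc => by
      cases c with
      | inl w => exact accPreVal w
      | inr s' => exact hc.elim)

instance : IsWellFounded T pre := ⟨⟨accPre⟩⟩

noncomputable def rk (a : T) : Ordinal := IsWellFounded.rank pre a

theorem rk_lt {a b : T} (h : pre a b) : rk a < rk b := IsWellFounded.rank_lt_of_rel h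

theorem rk_mono {a b : T} (h : ∀ c, pre c a → pre c b) : rk a ≤ rk b := by
  rw [rk, IsWellFounded.rank_eq]
  apply Ordinal.iSup_le
  rintro ⟨c, hc⟩
  exact Order.succ_le_of_lt (rk_lt (h c hc))

def esz : Exp → ℕ
  | .var _ => 1
  | .app a b => esz a + esz b + 1
  | .lam _ e => esz e + 1

theorem esz_pos (e : Exp) : 0 < esz e := by cases e <;> simp [esz]

abbrev OO := Ordinal ×ₗ ℕ

def bo : OO := toLex (0, 0)

noncomputable def μV (v : Val) : OO := toLex (rk (Sum.inl v), esz v.toExp)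
noncomputable def μS (s : State) : OO := toLex (rk (Sum.inr s), esz s.1)

noncomputable def ν : Option Val → OO
  | none => bo
  | some w => μV w

noncomputable def nodeS (s : State) : NP → OO
  | [] => μS s
  | [y] => if y ∈ Exp.fv s.1 then ν (s.2 y) else bo
  | _ :: _ :: _ => bo

noncomputable def nodeV (v : Val) : NP → OO
  | [] => μV v
  | [y] => if y ∈ Exp.fv v.toExp then ν (envOf v y) else bo
  | _ :: _ :: _ => bo

theorem lex_lt_of_le_lt {o1 o2 : Ordinal} {n1 n2 : ℕ} (h1 : o1 ≤ o2) (h2 : n1 < n2) :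
    (toLex (o1, n1) : OO) < toLex (o2, n2) := by
  rcases lt_or_eq_of_le h1 with h | h
  · exact (Prod.Lex.lt_iff).2 (Or.inl h)
  · exact (Prod.Lex.lt_iff).2 (Or.inr ⟨h, h2⟩)

theorem lex_lt_left {o1 o2 : Ordinal} {n1 n2 : ℕ} (h : o1 < o2) :
    (toLex (o1, n1) : OO) < toLex (o2, n2) :=
  (Prod.Lex.lt_iff).2 (Or.inl h)

theorem bo_le (o : OO) : bo ≤ o := by
  rcases eq_or_lt_of_le (show (0 : Ordinal) ≤ (ofLex o).1 from zero_le) with h | h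
  · exact (Prod.Lex.le_iff).2 (Or.inr ⟨h, Nat.zero_le _⟩)
  · exact (Prod.Lex.le_iff).2 (Or.inl h)

theorem bo_lt_μV (v : Val) : bo < μV v := lex_lt_of_le_lt zero_le (esz_pos _)

theorem bo_lt_μS (s : State) : bo < μS s := lex_lt_of_le_lt zero_le (esz_pos _)

theorem rk_clos_eq (x : String) (t : Exp) (ρ : Env) :
    rk (Sum.inl (Val.clos x t ρ)) = rk (Sum.inr (Exp.lam x t, ρ)) := by
  apply le_antisymm <;> apply rk_mono <;> rintro (w | s') hc
  · exact hc
  · exact hc.elim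
  · exact hc
  · exact hc.elim

theorem rk_state_le {e e' : Exp} {ρ : Env} (h : Exp.fv e' ⊆ Exp.fv e) :
    rk (Sum.inr (e', ρ)) ≤ rk (Sum.inr (e, ρ)) := by
  apply rk_mono
  rintro (w | s') hc
  · obtain ⟨y, hy, hw⟩ := hc
    exact ⟨y, h hy, hw⟩
  · exact hc.elim

theorem rk_body {x : String} {t0 : Exp} {ρ0 : Env} {v2 : Val} (hx : x ∉ Exp.fv t0) :
    rk (Sum.inr (t0, Env.update ρ0 x v2)) ≤ rk (Sum.inl (Val.clos x t0 ρ0)) := by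
  apply rk_mono
  rintro (w | s') hc
  · obtain ⟨y, hy, hw⟩ := hc
    have hyx : y ≠ x := fun hyx => hx (hyx ▸ hy)
    have hw' : ρ0 y = some w := by simpa [Env.update, hyx] using hw
    exact ⟨y, by simp [Exp.fv, hyx]; exact hy, hw'⟩
  · exact hc.elim

theorem μS_app1 {t1 t2 : Exp} {ρ : Env} : μS (t1, ρ) < μS (Exp.app t1 t2, ρ) :=
  lex_lt_of_le_lt (rk_state_le (by simp [Exp.fv])) (by simp [esz])

theorem μS_app2 {t1 t2 : Exp} {ρ : Env} : μS (t2, ρ) < μS (Exp.app t1 t2, ρ) :=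
  lex_lt_of_le_lt (rk_state_le (by simp [Exp.fv])) (by simp [esz])

theorem μV_clos_eq (x : String) (t : Exp) (ρ : Env) :
    μV (Val.clos x t ρ) = μS (Exp.lam x t, ρ) := by
  unfold μV μS
  rw [rk_clos_eq]
  rfl

theorem μS_body_lt {x : String} {t0 : Exp} {ρ0 : Env} {v2 : Val} (hx : x ∉ Exp.fv t0) :
    μS (t0, Env.update ρ0 x v2) < μV (Val.clos x t0 ρ0) :=
  lex_lt_of_le_lt (rk_body hx) (by simp [Val.toExp, esz])

theorem μV_lt_of_mem {x : String} {t : Exp} {ρ : Env} {y : String} {w : Val}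
    (hy : y ∈ Exp.fv (Exp.lam x t)) (hw : ρ y = some w) :
    μV w < μV (Val.clos x t ρ) :=
  lex_lt_left (rk_lt ⟨y, hy, hw⟩)

theorem μV_lt_μS_of_mem {e : Exp} {ρ : Env} {y : String} {w : Val}
    (hy : y ∈ Exp.fv e) (hw : ρ y = some w) : μV w < μS (e, ρ) :=
  lex_lt_left (rk_lt ⟨y, hy, hw⟩)

theorem nodeV_clos (x : String) (t : Exp) (ρ : Env) (p : NP) :
    nodeV (Val.clos x t ρ) p = nodeS (Exp.lam x t, ρ) p := by
  match p with
  | [] => simpa [nodeV, nodeS] using μV_clos_eq x t ρ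
  | [y] => rfl
  | _ :: _ :: _ => rfl

theorem nodeS_le_sub {t' t : Exp} {ρ : Env} (h : Exp.fv t' ⊆ Exp.fv t)
    (h2 : esz t' < esz t) (p : NP) : nodeS (t', ρ) p ≤ nodeS (t, ρ) p := by
  match p with
  | [] => exact (lex_lt_of_le_lt (rk_state_le h) h2).le
  | [y] =>
    by_cases hy : y ∈ Exp.fv t'
    · simp only [nodeS, if_pos hy, if_pos (h hy)]
      exact le_refl _
    · simp only [nodeS, if_neg hy]
      exact bo_le _
  | _ :: _ :: _ => exact le_refl _

end GT
namespace GT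

def Safe (G : ArcSet) (Vs Vt : NP → OO) : Prop :=
  ∀ p r q, (p, r, q) ∈ G → (r = Lab.eq → Vt q ≤ Vs p) ∧ (r = Lab.dec → Vt q < Vs p)

def Tg (G : ArcSet) (S : Set String) : Prop :=
  ∀ p r q, (p, r, q) ∈ G → q = ([] : NP) ∨ ∃ y ∈ S, q = [y]

theorem arc_eq {p r q p' r' q'} (h : ((p, r, q) : Arc) = (p', r', q')) :
    p = p' ∧ r = r' ∧ q = q' := by
  simpa [Prod.ext_iff] using h

theorem Safe_idEq {S : Set String} {Vs Vt : NP → OO} (h : ∀ p, Vt p ≤ Vs p) :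
    Safe (idEqS S) Vs Vt := by
  rintro p r q (ha | ⟨y, hy, ha⟩) <;>
    obtain ⟨rfl, rfl, rfl⟩ := arc_eq ha <;>
    exact ⟨fun _ => h _, fun hd => Lab.noConfusion hd⟩

theorem Tg_idEq {S : Set String} : Tg (idEqS S) S := by
  rintro p r q (ha | ⟨y, hy, ha⟩) <;> obtain ⟨rfl, rfl, rfl⟩ := arc_eq ha
  · exact Or.inl rfl
  · exact Or.inr ⟨y, hy, rfl⟩

theorem Safe_idDec {S : Set String} {Vs Vt : NP → OO} (h : ∀ p, Vt p ≤ Vs p)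
    (hε : Vt ([] : NP) < Vs ([] : NP)) : Safe (idDecS S) Vs Vt := by
  rintro p r q (ha | ⟨y, hy, ha⟩) <;> obtain ⟨rfl, rfl, rfl⟩ := arc_eq ha
  · exact ⟨fun he => Lab.noConfusion he, fun _ => hε⟩
  · exact ⟨fun _ => h _, fun hd => Lab.noConfusion hd⟩

theorem Safe_comp {G1 G2 : ArcSet} {Vs Vm Vt : NP → OO}
    (h1 : Safe G1 Vs Vm) (h2 : Safe G2 Vm Vt) : Safe (compA G1 G2) Vs Vt := by
  rintro p r q (⟨x, z, ha, hlab⟩ | ⟨x, z, ha, hlab⟩) <;>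
    obtain ⟨rfl, rfl, rfl⟩ := arc_eq ha
  · refine ⟨fun he => Lab.noConfusion he, fun _ => ?_⟩
    obtain ⟨y, s, hc | hc⟩ := hlab
    · have hxy := (h1 _ _ _ hc.1).2 rfl
      cases s with
      | eq => exact lt_of_le_of_lt ((h2 _ _ _ hc.2).1 rfl) hxy
      | dec => exact lt_trans ((h2 _ _ _ hc.2).2 rfl) hxy
    · have hyz := (h2 _ _ _ hc.2).2 rfl
      cases s with
      | eq => exact lt_of_lt_of_le hyz ((h1 _ _ _ hc.1).1 rfl)
      | dec => exact lt_trans hyz ((h1 _ _ _ hc.1).2 rfl)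
  · refine ⟨fun _ => ?_, fun hd => Lab.noConfusion hd⟩
    have heq : Lab.eq ∈ labelsA G1 G2 p q := by rw [hlab]; rfl
    obtain ⟨y, s, hc | hc⟩ := heq
    · have hs : s = Lab.eq := by
        by_contra hs
        have hdec : Lab.dec ∈ labelsA G1 G2 p q := by
          cases s with
          | eq => exact absurd rfl hs
          | dec => exact ⟨y, Lab.eq, Or.inr ⟨hc.1, hc.2⟩⟩
        rw [hlab] at hdec
        exact Lab.noConfusion hdec
      subst hs
      exact le_trans ((h2 _ _ _ hc.2).1 rfl) ((h1 _ _ _ hc.1).1 rfl)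
    · have hs : s = Lab.eq := by
        by_contra hs
        have hdec : Lab.dec ∈ labelsA G1 G2 p q := by
          cases s with
          | eq => exact absurd rfl hs
          | dec => exact ⟨y, Lab.eq, Or.inl ⟨hc.1, hc.2⟩⟩
        rw [hlab] at hdec
        exact Lab.noConfusion hdec
      subst hs
      exact le_trans ((h2 _ _ _ hc.2).1 rfl) ((h1 _ _ _ hc.1).1 rfl)

theorem Tg_comp {G1 G2 : ArcSet} {S : Set String} (h : Tg G2 S) :
    Tg (compA G1 G2) S := by
  rintro p r q (⟨x, z, ha, hlab⟩ | ⟨x, z, ha, hlab⟩) <;>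
    obtain ⟨rfl, rfl, rfl⟩ := arc_eq ha
  · obtain ⟨y, s, hc | hc⟩ := hlab
    · exact h _ _ _ hc.2
    · exact h _ _ _ hc.2
  · have heq : Lab.eq ∈ labelsA G1 G2 p q := by rw [hlab]; rfl
    obtain ⟨y, s, hc | hc⟩ := heq
    · exact h _ _ _ hc.2
    · exact h _ _ _ hc.2

theorem Safe_var {ρ : Env} {x : String} {v : Val} (hx : ρ x = some v) (S : Set String) :
    Safe (varGraphS x S) (nodeS (Exp.var x, ρ)) (nodeV v) := by
  have hsrc : nodeS (Exp.var x, ρ) [x] = μV v := by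
    simp [nodeS, Exp.fv, hx, ν]
  rintro p r q (ha | ⟨y, hy, ha⟩) <;> obtain ⟨rfl, rfl, rfl⟩ := arc_eq ha
  · refine ⟨fun _ => ?_, fun hd => Lab.noConfusion hd⟩
    rw [hsrc]
    exact le_refl _
  · refine ⟨fun he => Lab.noConfusion he, fun _ => ?_⟩
    rw [hsrc]
    obtain ⟨xv, tv, ρv⟩ := v
    show nodeV (Val.clos xv tv ρv) [y] < _
    by_cases hyf : y ∈ Exp.fv (Exp.lam xv tv)
    · simp only [nodeV, toExp_clos, if_pos hyf, envOf]
      erw [if_pos hyf]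
      cases hw : ρv y with
      | none => exact bo_lt_μV _
      | some w => exact μV_lt_of_mem hyf hw
    · simp only [nodeV, toExp_clos, if_neg hyf]
      erw [if_neg hyf]
      exact bo_lt_μV _

theorem Tg_var {x : String} {S : Set String} : Tg (varGraphS x S) S := by
  rintro p r q (ha | ⟨y, hy, ha⟩) <;> obtain ⟨rfl, rfl, rfl⟩ := arc_eq ha
  · exact Or.inl rfl
  · exact Or.inr ⟨y, hy, rfl⟩

end GT
namespace GT

theorem fvE_lam_not (Γ : Grammar) (x : String) (ee : ExpE) :
    x ∉ fvE Γ (ExpE.lam x ee) := by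
  rintro ⟨t, hd, hx⟩
  cases hd with
  | lam hd' => simp [Exp.fv] at hx

theorem deriv_fv {Γ : Grammar} {ee : ExpE} {t : Exp} (hd : Deriv Γ ee t) {y : String}
    (hy : y ∈ Exp.fv t) : y ∈ fvE Γ ee := ⟨t, hd, hy⟩

theorem Safe_callc {Γ : Grammar} {x : String} {ee0 : ExpE} {t0 t1 t2 : Exp}
    {ρ ρ0 : Env} {v2 : Val} {G1 G2 : ArcSet}
    (hd0 : Deriv Γ ee0 t0)
    (hsafe1 : Safe G1 (nodeS (t1, ρ)) (nodeV (Val.clos x t0 ρ0)))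
    (htg1 : Tg G1 (fvE Γ (ExpE.lam x ee0)))
    (hsafe2 : Safe G2 (nodeS (t2, ρ)) (nodeV v2)) :
    Safe (unionRS (fvE Γ ee0) (GminusS x (fvE Γ ee0) G1) (GepsS x G2))
      (nodeS (Exp.app t1 t2, ρ)) (nodeS (t0, Env.update ρ0 x v2)) := by
  set ρ' := Env.update ρ0 x v2 with hρ'
  -- source monotonicity
  have hS1 : ∀ p, nodeS (t1, ρ) p ≤ nodeS (Exp.app t1 t2, ρ) p :=
    nodeS_le_sub (by simp [Exp.fv]) (by simp [esz])
  have hS2 : ∀ p, nodeS (t2, ρ) p ≤ nodeS (Exp.app t1 t2, ρ) p :=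
    nodeS_le_sub (by simp [Exp.fv]) (by simp [esz])
  -- target facts
  have ht_var : ∀ z : String, z ≠ x →
      nodeS (t0, ρ') [z] ≤ nodeV (Val.clos x t0 ρ0) [z] := by
    intro z hzx
    by_cases hzf : z ∈ Exp.fv t0
    · have hzf' : z ∈ Exp.fv (Exp.lam x t0) := by simp [Exp.fv, hzx]; exact hzf
      have hup : ρ' z = ρ0 z := if_neg hzx
      simp only [nodeS, nodeV, toExp_clos, envOf, if_pos hzf, if_pos hzf', hup]
      erw [if_pos hzf']
    · simp only [nodeS, if_neg hzf]
      exact bo_le _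
  have ht_x : nodeS (t0, ρ') [x] ≤ μV v2 := by
    by_cases hxf : x ∈ Exp.fv t0
    · have hup : ρ' x = some v2 := if_pos rfl
      simp only [nodeS, if_pos hxf, hup, ν]
      exact le_refl _
    · simp only [nodeS, if_neg hxf]
      exact (bo_lt_μV _).le
  have hzx_of : ∀ z : String, z ∈ fvE Γ (ExpE.lam x ee0) → z ≠ x := by
    intro z hz hzx
    exact fvE_lam_not Γ x ee0 (hzx ▸ hz)
  -- go
  rintro p r q ⟨hin, -⟩
  rcases hin with hA | hB
  · rcases hA with ⟨y, r0, z, ha, hG1⟩ | ⟨z, ha, r0, hG1⟩ | ⟨hx0, p0, ha, r0, hG1⟩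
    · -- variable-to-variable arcs of G1
      obtain ⟨rfl, rfl, rfl⟩ := arc_eq ha
      have hz : ([z] : NP) = [] ∨ ∃ y' ∈ fvE Γ (ExpE.lam x ee0), ([z] : NP) = [y'] :=
        htg1 _ _ _ hG1
      have hzx : z ≠ x := by
        rcases hz with hz | ⟨y', hy', hz⟩
        · exact absurd hz (by simp)
        · cases List.cons.injEq .. ▸ hz with
          | _ => simp at hz; exact hz ▸ hzx_of y' hy'
      have htv := ht_var z hzx
      constructor
      · rintro rfl
        exact le_trans htv (le_trans ((hsafe1 _ _ _ hG1).1 rfl) (hS1 _))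
      · rintro rfl
        exact lt_of_le_of_lt htv (lt_of_lt_of_le ((hsafe1 _ _ _ hG1).2 rfl) (hS1 _))
    · -- ε ↓ z arcs
      obtain ⟨rfl, rfl, rfl⟩ := arc_eq ha
      refine ⟨fun he => Lab.noConfusion he, fun _ => ?_⟩
      have hz : ([z] : NP) = [] ∨ ∃ y' ∈ fvE Γ (ExpE.lam x ee0), ([z] : NP) = [y'] :=
        htg1 _ _ _ hG1
      have hzx : z ≠ x := by
        rcases hz with hz | ⟨y', hy', hz⟩
        · exact absurd hz (by simp)
        · simp at hz; exact hz ▸ hzx_of y' hy'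
      have htv := ht_var z hzx
      have hmid : nodeV (Val.clos x t0 ρ0) [z] ≤ μS (t1, ρ) := by
        cases r0 with
        | eq => exact (hsafe1 _ _ _ hG1).1 rfl
        | dec => exact ((hsafe1 _ _ _ hG1).2 rfl).le
      calc nodeS (t0, ρ') [z] ≤ μS (t1, ρ) := le_trans htv hmid
        _ < nodeS (Exp.app t1 t2, ρ) [] := μS_app1
    · -- p ↓ ε arcs (x ∉ fvE ee0)
      obtain ⟨rfl, rfl, rfl⟩ := arc_eq ha
      refine ⟨fun he => Lab.noConfusion he, fun _ => ?_⟩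
      have hxf : x ∉ Exp.fv t0 := fun hmem => hx0 (deriv_fv hd0 hmem)
      have hbody : nodeS (t0, ρ') [] < nodeV (Val.clos x t0 ρ0) [] := μS_body_lt hxf
      have hmid : nodeV (Val.clos x t0 ρ0) [] ≤ nodeS (t1, ρ) p := by
        cases r0 with
        | eq => exact (hsafe1 _ _ _ hG1).1 rfl
        | dec => exact ((hsafe1 _ _ _ hG1).2 rfl).le
      exact lt_of_lt_of_le hbody (le_trans hmid (hS1 _))
  · rcases hB with ⟨y, r0, ha, hG2⟩ | ⟨ha, r0, hG2⟩
    · -- y r x arcs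
      obtain ⟨rfl, rfl, rfl⟩ := arc_eq ha
      constructor
      · rintro rfl
        exact le_trans ht_x (le_trans ((hsafe2 _ _ _ hG2).1 rfl) (hS2 _))
      · rintro rfl
        exact lt_of_le_of_lt ht_x (lt_of_lt_of_le ((hsafe2 _ _ _ hG2).2 rfl) (hS2 _))
    · -- ε ↓ x arcs
      obtain ⟨rfl, rfl, rfl⟩ := arc_eq ha
      refine ⟨fun he => Lab.noConfusion he, fun _ => ?_⟩
      have hmid : nodeV v2 [] ≤ μS (t2, ρ) := by
        cases r0 with
        | eq => exact (hsafe2 _ _ _ hG2).1 rfl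
        | dec => exact ((hsafe2 _ _ _ hG2).2 rfl).le
      calc nodeS (t0, ρ') [x] ≤ μV v2 := ht_x
        _ ≤ μS (t2, ρ) := hmid
        _ < nodeS (Exp.app t1 t2, ρ) [] := μS_app2

end GT
namespace GT

/-- Tracing of an (approximate, extended) value by a pure closure. -/
inductive TrVal (Γ : Grammar) (P : ExpE) : ExpE → Val → Prop where
  | mk {x : String} {ee : ExpE} {t : Exp} {ρ : Env}
      (E1 : ∀ y, y ∈ Exp.fv (Exp.lam x t) → ∀ w : Val, ρ y = some w → ExpE)
      (E2 : ∀ y, y ∈ Exp.fv (Exp.lam x t) → ∀ w : Val, ρ y = some w → ExpE)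
      (E0 : ∀ y, y ∈ Exp.fv (Exp.lam x t) → ∀ w : Val, ρ y = some w → ExpE)
      (Vh : ∀ y, y ∈ Exp.fv (Exp.lam x t) → ∀ w : Val, ρ y = some w → ExpE)
      (GF1 : ∀ y, y ∈ Exp.fv (Exp.lam x t) → ∀ w : Val, ρ y = some w → ArcSet)
      (GF2 : ∀ y, y ∈ Exp.fv (Exp.lam x t) → ∀ w : Val, ρ y = some w → ArcSet) :
      Deriv Γ ee t →
      SubE Γ P (ExpE.lam x ee) →
      (∀ y ∈ Exp.fv (Exp.lam x t), (ρ y).isSome) →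
      (∀ y, ∀ hy : y ∈ Exp.fv (Exp.lam x t), ∀ w, ∀ hw : ρ y = some w,
        SubE Γ P (ExpE.app (E1 y hy w hw) (E2 y hy w hw))) →
      (∀ y, ∀ hy : y ∈ Exp.fv (Exp.lam x t), ∀ w, ∀ hw : ρ y = some w,
        EvalAX Γ P (E1 y hy w hw) (ExpE.lam y (E0 y hy w hw)) (GF1 y hy w hw)) →
      (∀ y, ∀ hy : y ∈ Exp.fv (Exp.lam x t), ∀ w, ∀ hw : ρ y = some w,
        EvalAX Γ P (E2 y hy w hw) (Vh y hy w hw) (GF2 y hy w hw)) →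
      (∀ y, ∀ hy : y ∈ Exp.fv (Exp.lam x t), ∀ w, ∀ hw : ρ y = some w,
        TrVal Γ P (Vh y hy w hw) w) →
      TrVal Γ P (ExpE.lam x ee) (Val.clos x t ρ)

/-- The environment tracing condition, on a set `S` of variables. -/
def TrEnvOn (Γ : Grammar) (P : ExpE) (S : Finset String) (ρ : Env) : Prop :=
  ∀ y ∈ S, ∀ w, ρ y = some w →
    ∃ e1 e2 e0 vh G1 G2, SubE Γ P (ExpE.app e1 e2) ∧
      EvalAX Γ P e1 (ExpE.lam y e0) G1 ∧ EvalAX Γ P e2 vh G2 ∧ TrVal Γ P vh w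

theorem TrVal_intro {Γ : Grammar} {P : ExpE} {x : String} {ee : ExpE} {t : Exp} {ρ : Env}
    (hd : Deriv Γ ee t) (hsub : SubE Γ P (ExpE.lam x ee))
    (hcl : ∀ y ∈ Exp.fv (Exp.lam x t), (ρ y).isSome)
    (hb : TrEnvOn Γ P (Exp.fv (Exp.lam x t)) ρ) :
    TrVal Γ P (ExpE.lam x ee) (Val.clos x t ρ) := by
  choose E1 E2 E0 Vh GF1 GF2 h1 h2 h3 h4 using hb
  exact TrVal.mk E1 E2 E0 Vh GF1 GF2 hd hsub hcl h1 h2 h3 h4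

theorem TrVal_elim {Γ : Grammar} {P : ExpE} {vh : ExpE} {v : Val}
    (h : TrVal Γ P vh v) :
    ∃ x ee t ρ, vh = ExpE.lam x ee ∧ v = Val.clos x t ρ ∧ Deriv Γ ee t ∧
      SubE Γ P (ExpE.lam x ee) ∧ (∀ y ∈ Exp.fv (Exp.lam x t), (ρ y).isSome) ∧
      TrEnvOn Γ P (Exp.fv (Exp.lam x t)) ρ := by
  cases h with
  | mk E1 E2 E0 Vh GF1 GF2 hd hsub hcl h1 h2 h3 h4 =>
    refine ⟨_, _, _, _, rfl, rfl, hd, hsub, hcl, ?_⟩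
    intro y hy w hw
    exact ⟨_, _, _, _, _, _, h1 y hy w hw, h2 y hy w hw, h3 y hy w hw, h4 y hy w hw⟩

theorem TrEnvOn_mono {Γ : Grammar} {P : ExpE} {S S' : Finset String} {ρ : Env}
    (hs : S' ⊆ S) (h : TrEnvOn Γ P S ρ) : TrEnvOn Γ P S' ρ :=
  fun y hy => h y (hs hy)

theorem SubE_trans {Γ : Grammar} {a b c : ExpE} (h1 : SubE Γ a b) (h2 : SubE Γ b c) :
    SubE Γ a c := by
  induction h1 with
  | refl => exact h2
  | lam _ ih => exact SubE.lam (ih h2)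
  | appL _ ih => exact SubE.appL (ih h2)
  | appR _ ih => exact SubE.appR (ih h2)
  | nt hp _ ih => exact SubE.nt hp (ih h2)

theorem unwrapDeriv {Γ : Grammar} {P : ExpE} {ee : ExpE} {t : Exp}
    (hd : Deriv Γ ee t) (hsub : SubE Γ P ee) :
    ∃ ee', Deriv Γ ee' t ∧ SubE Γ P ee' ∧ (∀ A, ee' ≠ ExpE.nt A) ∧
      ∀ (vh : ExpE) (G : ArcSet) (Vs Vt : NP → OO) (S : Set String),
        EvalAX Γ P ee' vh G → Safe G Vs Vt → Tg G S →
        ∃ G2, EvalAX Γ P ee vh G2 ∧ Safe G2 Vs Vt ∧ Tg G2 S := by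
  cases ee with
  | nt A =>
    cases hd with
    | nt hprod hd' =>
      refine ⟨_, hd', SubE_trans hsub (SubE.nt hprod (SubE.refl _)), ?_, ?_⟩
      · intro A' heq
        exact Γ.no_nt_prod _ hprod A' heq
      · intro vh G Vs Vt S hax hsafe htg
        exact ⟨_, EvalAX.resultN (CallAXn.gram hprod) hax,
          Safe_comp (Safe_idEq (fun p => le_refl _)) hsafe, Tg_comp htg⟩
  | var y =>
    exact ⟨_, hd, hsub, fun A h => ExpE.noConfusion h,
      fun vh G Vs Vt S hax hsafe htg => ⟨G, hax, hsafe, htg⟩⟩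
  | app a b =>
    exact ⟨_, hd, hsub, fun A h => ExpE.noConfusion h,
      fun vh G Vs Vt S hax hsafe htg => ⟨G, hax, hsafe, htg⟩⟩
  | lam y a =>
    exact ⟨_, hd, hsub, fun A h => ExpE.noConfusion h,
      fun vh G Vs Vt S hax hsafe htg => ⟨G, hax, hsafe, htg⟩⟩

/-- Safety of the approximate extended evaluation w.r.t. a traced pure evaluation. -/
theorem evalSafe {Γ : Grammar} {P : ExpE} {s : State} {w : Val} (hev : EvalE s w) :
    ∀ ee : ExpE, Deriv Γ ee s.1 → TrEnvOn Γ P (Exp.fv s.1) s.2 → SubE Γ P ee →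
      (∀ y ∈ Exp.fv s.1, (s.2 y).isSome) →
    ∃ vh G, EvalAX Γ P ee vh G ∧ TrVal Γ P vh w ∧ Safe G (nodeS s) (nodeV w) ∧
      Tg G (fvE Γ vh) := by
  induction hev with
  | value x e ρ =>
    intro ee hd htre hsub hcl
    obtain ⟨ee', hd', hsub', hne, hwrap⟩ := unwrapDeriv hd hsub
    cases hd' with
    | nt hp _ => exact absurd rfl (hne _)
    | lam hd0 =>
      rename_i ea
      have htr : TrVal Γ P (ExpE.lam x ea) (Val.clos x e ρ) :=
        TrVal_intro hd0 hsub' hcl htre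
      have hsafe : Safe (idEqS (fvE Γ (ExpE.lam x ea)))
          (nodeS (Exp.lam x e, ρ)) (nodeV (Val.clos x e ρ)) :=
        Safe_idEq (fun p => le_of_eq (nodeV_clos x e ρ p))
      obtain ⟨G2, hax2, hsafe2, htg2⟩ :=
        hwrap _ _ _ _ _ (EvalAX.value x ea) hsafe Tg_idEq
      exact ⟨ExpE.lam x ea, G2, hax2, htr, hsafe2, htg2⟩
  | var hx =>
    rename_i ρ x v
    intro ee hd htre hsub hcl
    obtain ⟨ee', hd', hsub', hne, hwrap⟩ := unwrapDeriv hd hsub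
    cases hd' with
    | nt hp _ => exact absurd rfl (hne _)
    | var =>
      obtain ⟨e1, e2, e0, vh, G1, G2, hsapp, hax1, hax2, htr⟩ :=
        htre x (by simp [Exp.fv]) v hx
      have hax : EvalAX Γ P (ExpE.var x) vh (varGraphS x (fvE Γ vh)) :=
        EvalAX.var hsapp hax1 hax2
      obtain ⟨G3, hax3, hsafe3, htg3⟩ :=
        hwrap _ _ _ _ _ hax (Safe_var hx (fvE Γ vh)) Tg_var
      exact ⟨vh, G3, hax3, htr, hsafe3, htg3⟩
  | apply hev1 hev2 hev3 ih1 ih2 ih3 =>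
    rename_i e1 e2 ρ ρ0 x e0 v2 v
    intro ee hd htre hsub hcl
    obtain ⟨ee', hd', hsub', hne, hwrap⟩ := unwrapDeriv hd hsub
    cases hd' with
    | nt hp _ => exact absurd rfl (hne _)
    | app hd1 hd2 =>
      rename_i ea1 ea2
      have hsub1 : SubE Γ P ea1 := SubE_trans hsub' (SubE.appL (SubE.refl _))
      have hsub2 : SubE Γ P ea2 := SubE_trans hsub' (SubE.appR (SubE.refl _))
      have hfv1 : Exp.fv e1 ⊆ Exp.fv (Exp.app e1 e2) := by simp [Exp.fv]
      have hfv2 : Exp.fv e2 ⊆ Exp.fv (Exp.app e1 e2) := by simp [Exp.fv]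
      have hcl1 : ∀ y ∈ Exp.fv e1, (ρ y).isSome := fun y hy => hcl y (hfv1 hy)
      have hcl2 : ∀ y ∈ Exp.fv e2, (ρ y).isSome := fun y hy => hcl y (hfv2 hy)
      obtain ⟨vh1, G1, hax1, htr1, hsafe1, htg1⟩ :=
        ih1 ea1 hd1 (TrEnvOn_mono hfv1 htre) hsub1 hcl1
      obtain ⟨vh2, G2, hax2, htr2, hsafe2, htg2⟩ :=
        ih2 ea2 hd2 (TrEnvOn_mono hfv2 htre) hsub2 hcl2
      obtain ⟨x', ee0, t', ρ', hvh1, hv1, hd0, hsubl, hc0, htre0⟩ := TrVal_elim htr1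
      obtain ⟨rfl, rfl, rfl⟩ : x = x' ∧ e0 = t' ∧ ρ0 = ρ' := by
        injection hv1 with h1 h2 h3
        exact ⟨h1, h2, h3⟩
      subst hvh1
      -- body environment
      have htre3 : TrEnvOn Γ P (Exp.fv e0) (Env.update ρ0 x v2) := by
        intro y hy wv hyw
        by_cases hyx : y = x
        · subst hyx
          rw [show Env.update ρ0 y v2 y = some v2 from if_pos rfl] at hyw
          cases hyw
          exact ⟨ea1, ea2, ee0, vh2, G1, G2, hsub', hax1, hax2, htr2⟩
        · rw [show Env.update ρ0 x v2 y = ρ0 y from if_neg hyx] at hyw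
          exact htre0 y (by simp [Exp.fv, hyx]; exact hy) wv hyw
      have hcl3 : ∀ y ∈ Exp.fv e0, ((Env.update ρ0 x v2) y).isSome := by
        intro y hy
        by_cases hyx : y = x
        · subst hyx
          rw [show Env.update ρ0 y v2 y = some v2 from if_pos rfl]
          rfl
        · rw [show Env.update ρ0 x v2 y = ρ0 y from if_neg hyx]
          exact hc0 y (by simp [Exp.fv, hyx]; exact hy)
      have hsub0 : SubE Γ P ee0 := SubE_trans hsubl (SubE.lam (SubE.refl _))
      obtain ⟨vh, G3, hax3, htr3, hsafe3, htg3⟩ := ih3 ee0 hd0 htre3 hsub0 hcl3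
      have haxc : EvalAX Γ P (ExpE.app ea1 ea2) vh
          (compA (unionRS (fvE Γ ee0) (GminusS x (fvE Γ ee0) G1) (GepsS x G2)) G3) :=
        EvalAX.resultC (CallAXc.call hax1 hax2) hax3
      have hsafec : Safe
          (compA (unionRS (fvE Γ ee0) (GminusS x (fvE Γ ee0) G1) (GepsS x G2)) G3)
          (nodeS (Exp.app e1 e2, ρ)) (nodeV v) :=
        Safe_comp (Safe_callc hd0 hsafe1 htg1 hsafe2) hsafe3
      obtain ⟨G4, hax4, hsafe4, htg4⟩ :=
        hwrap _ _ _ _ _ haxc hsafec (Tg_comp htg3)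
      exact ⟨vh, G4, hax4, htr3, hsafe4, htg4⟩

end GT
namespace GT

/-- Invariant carried along the constructed infinite call sequence. -/
def Inv (Γ : Grammar) (P : ExpE) (ee : ExpE) (s : State) : Prop :=
  Deriv Γ ee s.1 ∧ TrEnvOn Γ P (Exp.fv s.1) s.2 ∧ SubE Γ P ee ∧
    (∀ y ∈ Exp.fv s.1, (s.2 y).isSome) ∧ ¬∃ v, EvalE s v

theorem stepLemma {Γ : Grammar} {P : ExpE} {ee : ExpE} {s : State}
    (hinv : Inv Γ P ee s) :
    ∃ ee' s' G, CallAXAny Γ P ee ee' G ∧ Safe G (nodeS s) (nodeS s') ∧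
      Inv Γ P ee' s' := by
  obtain ⟨hd, htre, hsub, hcl, hnt⟩ := hinv
  obtain ⟨t, ρ⟩ := s
  cases ee with
  | nt A =>
    cases hd with
    | nt hprod hd' =>
      exact ⟨_, (t, ρ), idEqS (fvE Γ _),
        Or.inr (Or.inr (Or.inr (CallAXn.gram hprod))),
        Safe_idEq (fun p => le_refl _),
        hd', htre, SubE_trans hsub (SubE.nt hprod (SubE.refl _)), hcl, hnt⟩
  | var z =>
    exfalso
    cases hd with
    | var =>
      have := hcl z (by simp [Exp.fv])
      cases hz : ρ z with
      | none => simp [hz] at this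
      | some v => exact hnt ⟨v, EvalE.var hz⟩
  | lam z ea =>
    exfalso
    cases hd with
    | lam hd0 => exact hnt ⟨_, EvalE.value _ _ _⟩
  | app ea1 ea2 =>
    cases hd with
    | app hd1 hd2 =>
      rename_i t1 t2
      have hfv1 : Exp.fv t1 ⊆ Exp.fv (Exp.app t1 t2) := by simp [Exp.fv]
      have hfv2 : Exp.fv t2 ⊆ Exp.fv (Exp.app t1 t2) := by simp [Exp.fv]
      have hsub1 : SubE Γ P ea1 := SubE_trans hsub (SubE.appL (SubE.refl _))
      have hsub2 : SubE Γ P ea2 := SubE_trans hsub (SubE.appR (SubE.refl _))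
      by_cases h1 : ∃ v1, EvalE (t1, ρ) v1
      · obtain ⟨v1, hev1⟩ := h1
        by_cases h2 : ∃ v2, EvalE (t2, ρ) v2
        · obtain ⟨v2, hev2⟩ := h2
          obtain ⟨vh1, G1, hax1, htr1, hsafe1, htg1⟩ :=
            evalSafe hev1 ea1 hd1 (TrEnvOn_mono hfv1 htre) hsub1
              (fun y hy => hcl y (hfv1 hy))
          obtain ⟨vh2, G2, hax2, htr2, hsafe2, htg2⟩ :=
            evalSafe hev2 ea2 hd2 (TrEnvOn_mono hfv2 htre) hsub2
              (fun y hy => hcl y (hfv2 hy))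
          obtain ⟨x0, ee0, t0, ρ0, hvh1, hv1, hd0, hsubl, hc0, htre0⟩ := TrVal_elim htr1
          subst hvh1
          subst hv1
          have hnt' : ¬∃ v, EvalE (t0, Env.update ρ0 x0 v2) v := by
            rintro ⟨v, hv⟩
            exact hnt ⟨v, EvalE.apply hev1 hev2 hv⟩
          have htre3 : TrEnvOn Γ P (Exp.fv t0) (Env.update ρ0 x0 v2) := by
            intro y hy wv hyw
            by_cases hyx : y = x0
            · subst hyx
              rw [show Env.update ρ0 y v2 y = some v2 from if_pos rfl] at hyw
              cases hyw
              exact ⟨ea1, ea2, ee0, vh2, G1, G2, hsub, hax1, hax2, htr2⟩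
            · rw [show Env.update ρ0 x0 v2 y = ρ0 y from if_neg hyx] at hyw
              exact htre0 y (by simp [Exp.fv, hyx]; exact hy) wv hyw
          have hcl3 : ∀ y ∈ Exp.fv t0, ((Env.update ρ0 x0 v2) y).isSome := by
            intro y hy
            by_cases hyx : y = x0
            · subst hyx
              rw [show Env.update ρ0 y v2 y = some v2 from if_pos rfl]
              rfl
            · rw [show Env.update ρ0 x0 v2 y = ρ0 y from if_neg hyx]
              exact hc0 y (by simp [Exp.fv, hyx]; exact hy)
          have hsub0 : SubE Γ P ee0 := SubE_trans hsubl (SubE.lam (SubE.refl _))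
          exact ⟨ee0, (t0, Env.update ρ0 x0 v2), _,
            Or.inr (Or.inr (Or.inl (CallAXc.call hax1 hax2))),
            Safe_callc hd0 hsafe1 htg1 hsafe2,
            hd0, htre3, hsub0, hcl3, hnt'⟩
        · exact ⟨ea2, (t2, ρ), idDecS (fvE Γ ea2),
            Or.inr (Or.inl (CallAXd.opnd ea1 ea2)),
            Safe_idDec (nodeS_le_sub hfv2 (by simp [esz])) μS_app2,
            hd2, TrEnvOn_mono hfv2 htre, hsub2, fun y hy => hcl y (hfv2 hy), h2⟩
      · exact ⟨ea1, (t1, ρ), idDecS (fvE Γ ea1),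
          Or.inl (CallAXr.oper ea1 ea2),
          Safe_idDec (nodeS_le_sub hfv1 (by simp [esz])) μS_app1,
          hd1, TrEnvOn_mono hfv1 htre, hsub1, fun y hy => hcl y (hfv1 hy), h1⟩

end GT
/-- Γ-termination theorem: if every infinite call sequence
`P = e₀ → e₁, G₁ → e₂, G₂ → …` in the approximate extended semantics for `P`
carries a thread of infinite descent in its multipath, then `P` is
Γ-terminating: every pure instance `Q` of `P` (obtained by replacing each
nonterminal occurrence of `P` by a pure λ-expression it derives, i.e.
`P ⇒*_Γ Q`) terminates under call-by-value evaluation. -/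
theorem gamma_termination (Γ : Grammar) (P : ExpE) (hP : fvE Γ P = ∅)
    (h : ∀ (f : ℕ → ExpE) (g : ℕ → ArcSet), f 0 = P →
      (∀ n, CallAXAny Γ P (f n) (f (n + 1)) (g n)) →
      ∃ (j : ℕ) (a : ℕ → NP) (r : ℕ → Lab),
        (∀ k, j ≤ k → (a k, r k, a (k + 1)) ∈ g k) ∧
        (∀ N, ∃ k, N ≤ k ∧ j ≤ k ∧ r k = Lab.dec)) :
    ∀ Q : Exp, Deriv Γ P Q → ∃ v, EvalE (Q, Env.empty) v := by
  intro Q hQ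
  by_contra hnt
  have hinv0 : GT.Inv Γ P P (Q, Env.empty) := by
    refine ⟨hQ, ?_, SubE.refl P, ?_, hnt⟩
    · intro y hy w hw
      exact absurd hw (by simp [Env.empty])
    · intro y hy
      exfalso
      have : y ∈ fvE Γ P := GT.deriv_fv hQ hy
      rw [hP] at this
      exact this
  -- build the infinite call sequence
  have hstep : ∀ p : {q : ExpE × State // GT.Inv Γ P q.1 q.2},
      ∃ q : {q : ExpE × State // GT.Inv Γ P q.1 q.2}, ∃ G,
        CallAXAny Γ P p.1.1 q.1.1 G ∧ GT.Safe G (GT.nodeS p.1.2) (GT.nodeS q.1.2) := by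
    rintro ⟨⟨ee, s⟩, hinv⟩
    obtain ⟨ee', s', G, hc, hs, hinv'⟩ := GT.stepLemma hinv
    exact ⟨⟨(ee', s'), hinv'⟩, G, hc, hs⟩
  choose nxt GG hcall hsafe using hstep
  let F : ℕ → {q : ExpE × State // GT.Inv Γ P q.1 q.2} :=
    fun n => Nat.rec ⟨(P, (Q, Env.empty)), hinv0⟩ (fun _ p => nxt p) n
  obtain ⟨j, a, r, harc, hinf⟩ :=
    h (fun n => (F n).1.1) (fun n => GG (F n)) rfl (fun n => hcall (F n))
  set W : ℕ → GT.OO := fun k => GT.nodeS (F k).1.2 (a k) with hW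
  have hkey : ∀ k, j ≤ k → W (k + 1) ≤ W k ∧ (r k = Lab.dec → W (k + 1) < W k) := by
    intro k hk
    have hs := hsafe (F k) (a k) (r k) (a (k + 1)) (harc k hk)
    cases hrk : r k with
    | eq => exact ⟨hs.1 hrk, fun hd => Lab.noConfusion hd⟩
    | dec => exact ⟨(hs.2 hrk).le, fun _ => hs.2 hrk⟩
  have hmono : ∀ k m, j ≤ k → k ≤ m → W m ≤ W k := by
    intro k m hk hkm
    induction m, hkm using Nat.le_induction with
    | base => exact le_refl _
    | succ m hm ih => exact le_trans ((hkey m (le_trans hk hm)).1) ih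
  -- minimal element of the weights from index j on
  have hwf : WellFounded ((· < ·) : GT.OO → GT.OO → Prop) := wellFounded_lt
  set Sset : Set GT.OO := {o | ∃ k, j ≤ k ∧ W k = o} with hSset
  have hne : Sset.Nonempty := ⟨W j, j, le_refl _, rfl⟩
  obtain ⟨k0, hk0, hWk0⟩ := hwf.min_mem Sset hne
  obtain ⟨k, hkk0, hkj, hdec⟩ := hinf k0
  have h1 : W (k + 1) < W k := (hkey k hkj).2 hdec
  have h2 : W k ≤ W k0 := hmono k0 k hk0 hkk0
  have h3 : W (k + 1) < hwf.min Sset hne := by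
    rw [← hWk0]
    exact lt_of_lt_of_le h1 h2
  exact hwf.not_lt_min Sset ⟨k + 1, by omega, rfl⟩ h3
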